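/- Fix integers d ≥ 1, m ≥ 1 and a real σ > 0, and let b = 2md. Consider the RBF kernel k(x, x′) = exp(−½‖x − x′‖²) on ℝ^d. Then there exist points Z : Fin b → ℝ^d such that, writing K for the b×b matrix with entries K_{jl} = k(Z_j, Z_l), and G for the d×b matrix with entries G_{ij} = (Z_j)_i · exp(−½‖Z_j‖²), the matrix K + σ² I is invertible and d − trace( G · (K + σ² I)⁻¹ · Gᵀ ) ≤ d · √( 2σ² / (m + σ²) ). -/

import Mathlib

open Matrix

set_option maxHeartbeats 1000000

section RbfAuxiliary

set_option maxHeartbeats 1000000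

lemma numeric_bound (m σ : ℝ) (hm : 1 ≤ m) (hσ : 0 < σ) (hσm : σ^2 ≤ m) :
    1 - 2*m*(σ / Real.sqrt (2*m))*Real.exp (-(σ / Real.sqrt (2*m))) /
      (m*(1 - Real.exp (-(2*(σ / Real.sqrt (2*m))))) + σ^2) ≤
    Real.sqrt (2*σ^2/(m+σ^2)) := by
  set s := Real.sqrt (2*m) with hs_def
  have hm0 : (0:ℝ) < m := by linarith
  have hs2 : s^2 = 2*m := Real.sq_sqrt (by linarith)
  have hs0 : 0 < s := Real.sqrt_pos.2 (by linarith)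
  have hσs : σ ≤ s := by nlinarith
  set t := σ / s with ht_def
  have ht0 : 0 < t := div_pos hσ hs0
  have ht1 : t ≤ 1 := (div_le_one hs0).2 hσs
  have h2mt : 2*m*t = σ*s := by
    rw [ht_def]; field_simp; nlinarith
  have h2mt2 : 2*m*t^2 = σ^2 := by
    have h' : 2*m*t^2 = (2*m*t)*t := by ring
    rw [h', h2mt, ht_def]; field_simp
  have he1 : 1 - t ≤ Real.exp (-t) := by
    have := Real.add_one_le_exp (-t); linarith
  have he2 : 1 - 2*t ≤ Real.exp (-(2*t)) := by
    have := Real.add_one_le_exp (-(2*t)); linarith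
  have he3 : Real.exp (-(2*t)) ≤ 1 := Real.exp_le_one_iff.2 (by linarith)
  have hE0 : 0 < Real.exp (-t) := Real.exp_pos _
  set D := m*(1 - Real.exp (-(2*t))) + σ^2 with hD_def
  have hD0 : 0 < D := by nlinarith
  have hDle : D ≤ 2*m*t + σ^2 := by nlinarith
  have hb0 : (0:ℝ) < 2*m*t + σ^2 := by nlinarith
  have hnum : 2*m*t*(1-t) ≤ 2*m*t*Real.exp (-t) := by nlinarith
  have hnum0 : 0 ≤ 2*m*t*(1-t) := by nlinarith
  have step1 : 2*m*t*(1-t)/(2*m*t+σ^2) ≤ 2*m*t*Real.exp (-t) / D :=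
    div_le_div₀ (by nlinarith) hnum hD0 hDle
  have hbσ : 2*m*t+σ^2 = σ*(s+σ) := by rw [h2mt]; ring
  have ha : 2*m*t*(1-t) = σ*s - σ^2 := by
    have h' : 2*m*t*(1-t) = 2*m*t - 2*m*t^2 := by ring
    rw [h', h2mt, h2mt2]
  have hsσ0 : (0:ℝ) < s + σ := by linarith
  have step2 : 1 - 2*m*t*(1-t)/(2*m*t+σ^2) = 2*σ/(s+σ) := by
    rw [ha, hbσ]
    field_simp
    ring
  have step3 : 2*σ/(s+σ) ≤ Real.sqrt (2*σ^2/(m+σ^2)) := by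
    rw [Real.le_sqrt (by positivity) (by positivity)]
    rw [div_pow, div_le_div_iff₀ (by positivity) (by positivity)]
    nlinarith [mul_pos hσ hs0, sq_nonneg σ, mul_pos (mul_pos hσ hσ) (mul_pos hσ hs0)]
  calc 1 - 2*m*t*Real.exp (-t) / D ≤ 1 - 2*m*t*(1-t)/(2*m*t+σ^2) := by linarith
  _ = 2*σ/(s+σ) := step2
  _ ≤ _ := step3


lemma euclid_norm_sq {d : ℕ} (x : EuclideanSpace ℝ (Fin d)) :
    ‖x‖^2 = ∑ i, (x i)^2 := by
  rw [EuclideanSpace.norm_eq, Real.sq_sqrt (by positivity)]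
  simp [sq_abs]

lemma sum_sq_single_sub {d : ℕ} (i1 i2 : Fin d) (a b : ℝ) :
    ∑ i', ((if i' = i1 then a else 0) - (if i' = i2 then b else 0))^2 =
      if i1 = i2 then (a-b)^2 else a^2 + b^2 := by
  by_cases h : i1 = i2
  · subst h
    rw [if_pos rfl]
    have hterm : ∀ x : Fin d, ((if x = i1 then a else 0) - (if x = i1 then b else 0))^2
        = if x = i1 then (a-b)^2 else 0 := by
      intro x; by_cases hx : x = i1 <;> simp [hx]
    rw [Finset.sum_congr rfl (fun x _ => hterm x),
      Finset.sum_ite_eq' Finset.univ i1 (fun _ => (a-b)^2)]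
    simp
  · rw [if_neg h]
    have h' : ¬ i2 = i1 := fun hh => h hh.symm
    have hterm : ∀ x : Fin d, ((if x = i1 then a else 0) - (if x = i2 then b else 0))^2
        = (if x = i1 then a^2 else 0) + (if x = i2 then b^2 else 0) := by
      intro x
      by_cases h1 : x = i1 <;> by_cases h2 : x = i2
      · exact absurd (h1 ▸ h2 ▸ rfl : i1 = i2) h
      · simp [h1, h2, h]
      · simp [h1, h2, h']
      · simp [h1, h2]
    rw [Finset.sum_congr rfl (fun x _ => hterm x), Finset.sum_add_distrib,
      Finset.sum_ite_eq' Finset.univ i1 (fun _ => a^2),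
      Finset.sum_ite_eq' Finset.univ i2 (fun _ => b^2)]
    simp

lemma pair_ind_sq {N : Type*} [Fintype N] {d : ℕ} (c : N → Fin d) (f : N → ℝ) :
    ∑ j, ∑ l, (if c j = c l then f j * f l else 0)
      = ∑ i, (∑ j, if c j = i then f j else 0)^2 := by
  have key : ∀ i : Fin d, (∑ j, if c j = i then f j else 0)^2
      = ∑ j, ∑ l, (if c j = i then f j else 0) * (if c l = i then f l else 0) := by
    intro i
    rw [sq, Finset.sum_mul_sum]
  calc ∑ j, ∑ l, (if c j = c l then f j * f l else 0)
      = ∑ j, ∑ l, ∑ i, (if c j = i then f j else 0) * (if c l = i then f l else 0) := by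
        refine Finset.sum_congr rfl (fun j _ => Finset.sum_congr rfl (fun l _ => ?_))
        simp only [ite_mul, zero_mul, mul_ite, mul_zero]
        rw [Finset.sum_ite_eq Finset.univ (c l) (fun i => if c j = i then f j * f l else 0)]
        simp only [Finset.mem_univ, if_true]
    _ = ∑ j, ∑ i, ∑ l, (if c j = i then f j else 0) * (if c l = i then f l else 0) :=
        Finset.sum_congr rfl (fun j _ => Finset.sum_comm)
    _ = ∑ i, ∑ j, ∑ l, (if c j = i then f j else 0) * (if c l = i then f l else 0) :=
        Finset.sum_comm
    _ = ∑ i, (∑ j, if c j = i then f j else 0)^2 := by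
        exact Finset.sum_congr rfl (fun i _ => (key i).symm)
variable {n : Type*} [Fintype n] [DecidableEq n]

lemma posdef_shift (K : Matrix n n ℝ) (hK : K.PosSemidef) (σ : ℝ) (hσ : 0 < σ) :
    (K + σ^2 • (1 : Matrix n n ℝ)).PosDef := by
  rw [Matrix.posDef_iff_dotProduct_mulVec]
  constructor
  · exact hK.isHermitian.add (by simp [Matrix.IsHermitian])
  · intro x hx
    rw [star_trivial]
    have h1 : (K + σ^2 • 1) *ᵥ x = K *ᵥ x + σ^2 • x := by
      rw [Matrix.add_mulVec, Matrix.smul_mulVec, Matrix.one_mulVec]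
    rw [h1, dotProduct_add, dotProduct_smul]
    have h2 : 0 ≤ x ⬝ᵥ K *ᵥ x := by simpa using hK.dotProduct_mulVec_nonneg x
    have h4 : 0 ≤ x ⬝ᵥ x := Finset.sum_nonneg (fun i _ => mul_self_nonneg (x i))
    have h3 : 0 < x ⬝ᵥ x := by
      rcases lt_or_eq_of_le h4 with h | h
      · exact h
      · exact absurd ((dotProduct_self_eq_zero).1 h.symm) hx
    have h5 : 0 < σ^2 * (x ⬝ᵥ x) := by positivity
    simp only [smul_eq_mul]
    linarith

lemma psd_cs (A : Matrix n n ℝ) (hA : A.PosSemidef) (x y : n → ℝ) :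
    (x ⬝ᵥ A *ᵥ y)^2 ≤ (x ⬝ᵥ A *ᵥ x) * (y ⬝ᵥ A *ᵥ y) := by
  have ht : Aᵀ = A := hA.isHermitian
  have hsym : ∀ u v : n → ℝ, u ⬝ᵥ A *ᵥ v = v ⬝ᵥ A *ᵥ u := by
    intro u v
    calc u ⬝ᵥ A *ᵥ v = (A *ᵥ v) ⬝ᵥ u := dotProduct_comm _ _
    _ = (v ᵥ* Aᵀ) ⬝ᵥ u := by rw [Matrix.vecMul_transpose]
    _ = v ⬝ᵥ Aᵀ *ᵥ u := by rw [← Matrix.dotProduct_mulVec]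
    _ = v ⬝ᵥ A *ᵥ u := by rw [ht]
  have key : ∀ t : ℝ, 0 ≤ (y ⬝ᵥ A *ᵥ y) * (t*t) + (2 * (x ⬝ᵥ A *ᵥ y)) * t + (x ⬝ᵥ A *ᵥ x) := by
    intro t
    have h0 := hA.dotProduct_mulVec_nonneg (x + t • y)
    rw [star_trivial] at h0
    have hexp : (x + t • y) ⬝ᵥ A *ᵥ (x + t • y) =
        (y ⬝ᵥ A *ᵥ y) * (t*t) + (2 * (x ⬝ᵥ A *ᵥ y)) * t + (x ⬝ᵥ A *ᵥ x) := by
      rw [Matrix.mulVec_add, dotProduct_add, add_dotProduct, add_dotProduct]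
      rw [Matrix.mulVec_smul, dotProduct_smul, dotProduct_smul, smul_dotProduct,
        smul_dotProduct, hsym y x]
      simp only [smul_eq_mul]
      ring
    rw [hexp] at h0
    simpa using h0
  have hd := discrim_le_zero key
  unfold discrim at hd
  nlinarith [hd]

lemma inv_quad_lower (A : Matrix n n ℝ) (hA : A.PosDef) (v : n → ℝ)
    (hq : 0 < v ⬝ᵥ A *ᵥ v) :
    (v ⬝ᵥ v)^2 / (v ⬝ᵥ A *ᵥ v) ≤ v ⬝ᵥ A⁻¹ *ᵥ v := by
  have hdet : IsUnit A.det := hA.det_pos.ne'.isUnit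
  have hcs := psd_cs A hA.posSemidef v (A⁻¹ *ᵥ v)
  have h1 : A *ᵥ (A⁻¹ *ᵥ v) = v := by
    rw [Matrix.mulVec_mulVec, Matrix.mul_nonsing_inv _ hdet, Matrix.one_mulVec]
  rw [h1, dotProduct_comm (A⁻¹ *ᵥ v) v] at hcs
  rw [div_le_iff₀ hq]
  calc (v ⬝ᵥ v)^2 ≤ (v ⬝ᵥ A *ᵥ v) * (v ⬝ᵥ A⁻¹ *ᵥ v) := hcs
  _ = (v ⬝ᵥ A⁻¹ *ᵥ v) * (v ⬝ᵥ A *ᵥ v) := by ring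

lemma trace_form {d : ℕ} (B : Matrix n n ℝ) (G : Matrix (Fin d) n ℝ) :
    Matrix.trace (G * B * Gᵀ) = ∑ i, (fun j => G i j) ⬝ᵥ B *ᵥ (fun j => G i j) := by
  rw [Matrix.trace]
  refine Finset.sum_congr rfl (fun i _ => ?_)
  rw [Matrix.diag_apply, Matrix.mul_apply]
  simp only [Matrix.mul_apply, Matrix.transpose_apply, dotProduct, Matrix.mulVec]
  calc ∑ x, (∑ j, G i j * B j x) * G i x
      = ∑ x, ∑ j, G i j * B j x * G i x := by
        refine Finset.sum_congr rfl (fun x _ => ?_); rw [Finset.sum_mul]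
    _ = ∑ j, ∑ x, G i j * B j x * G i x := Finset.sum_comm
    _ = ∑ j, G i j * ∑ x, B j x * G i x := by
        refine Finset.sum_congr rfl (fun j _ => ?_)
        rw [Finset.mul_sum]
        exact Finset.sum_congr rfl (fun x _ => by ring)


end RbfAuxiliary

/-- For the RBF kernel with noise variance `σ² > 0`, there is a design of `2md` points whose
posterior gradient covariance at the origin has trace at most `d·√(2σ²/(m+σ²))`. -/
theorem rbf_noisy_error_function_bound (d m : ℕ) (hd : 1 ≤ d) (hm : 1 ≤ m)
    (σ : ℝ) (hσ : 0 < σ) :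
    ∃ Z : Fin (2 * m * d) → EuclideanSpace ℝ (Fin d),
      ∀ (K : Matrix (Fin (2 * m * d)) (Fin (2 * m * d)) ℝ)
        (G : Matrix (Fin d) (Fin (2 * m * d)) ℝ),
        K = Matrix.of (fun j l => Real.exp (-(1 / 2) * ‖Z j - Z l‖ ^ 2)) →
        G = Matrix.of (fun i j => Z j i * Real.exp (-(1 / 2) * ‖Z j‖ ^ 2)) →
        IsUnit (K + σ ^ 2 • (1 : Matrix (Fin (2 * m * d)) (Fin (2 * m * d)) ℝ)).det ∧
          (d : ℝ) - Matrix.trace (G * (K + σ ^ 2 • 1)⁻¹ * Gᵀ) ≤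
            (d : ℝ) * Real.sqrt (2 * σ ^ 2 / ((m : ℝ) + σ ^ 2)) := by
  by_cases hcase : (m:ℝ) ≤ σ^2
  ·
      refine ⟨fun _ => 0, ?_⟩
      intro K G hKdef hGdef
      have hm1 : (1:ℝ) ≤ (m:ℝ) := by exact_mod_cast hm
      have hGzero : G = 0 := by
        rw [hGdef]; ext i j; simp
      have hKpsd : K.PosSemidef := by
        rw [Matrix.posSemidef_iff_dotProduct_mulVec]
        constructor
        · rw [hKdef]
          ext j l
          simp [Matrix.conjTranspose_apply]
        · intro x
          rw [star_trivial, hKdef]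
          have hform : x ⬝ᵥ (Matrix.of fun j l =>
              Real.exp (-(1 / 2) * ‖(0:EuclideanSpace ℝ (Fin d)) - 0‖ ^ 2)) *ᵥ x
              = (∑ j, x j) * (∑ l, x l) := by
            simp [dotProduct, Matrix.mulVec, Finset.mul_sum, Finset.sum_mul]
            exact Finset.sum_congr rfl (fun j _ => Finset.sum_congr rfl (fun l _ => mul_comm _ _))
          rw [hform]
          exact mul_self_nonneg _
      have hA := posdef_shift K hKpsd σ hσ
      refine ⟨hA.det_pos.ne'.isUnit, ?_⟩
      rw [hGzero]
      rw [Matrix.zero_mul, Matrix.zero_mul, Matrix.trace_zero, sub_zero]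
      have h1 : (1:ℝ) ≤ Real.sqrt (2 * σ ^ 2 / ((m : ℝ) + σ ^ 2)) := by
        rw [show (1:ℝ) = Real.sqrt 1 from Real.sqrt_one.symm]
        apply Real.sqrt_le_sqrt
        rw [le_div_iff₀ (by positivity)]
        linarith
      have hd0 : (0:ℝ) ≤ d := Nat.cast_nonneg d
      nlinarith
  ·
      have hσm : σ^2 ≤ (m:ℝ) := le_of_lt (lt_of_not_ge hcase)
      have hm1 : (1:ℝ) ≤ (m:ℝ) := by exact_mod_cast hm
      have hm0 : (0:ℝ) < m := by linarith
      set s0 := Real.sqrt (2*(m:ℝ)) with hs0_def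
      have hs00 : 0 < s0 := Real.sqrt_pos.2 (by linarith)
      set t := σ / s0 with ht_def
      have ht0 : 0 < t := div_pos hσ hs00
      set ε := Real.sqrt t with hε_def
      have hε2 : ε^2 = t := Real.sq_sqrt ht0.le
      have hε0 : 0 < ε := Real.sqrt_pos.2 ht0
      set E := Real.exp (-(1/2) * t) with hE_def
      have hE0 : 0 < E := Real.exp_pos _
      have hE2 : E^2 = Real.exp (-t) := by
        rw [hE_def, sq, ← Real.exp_add]; congr 1; ring
      set e : Fin 2 × Fin m × Fin d ≃ Fin (2*m*d) :=
        ((Equiv.refl (Fin 2)).prodCongr finProdFinEquiv).trans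
          (finProdFinEquiv.trans (finCongr (by ring))) with he_def
      set sg : Fin 2 → ℝ := ![1, -1] with hsg_def
      have hsg : ∀ s : Fin 2, sg s = 1 ∨ sg s = -1 := by
        intro s
        fin_cases s
        · exact Or.inl (by norm_num [hsg_def])
        · exact Or.inr (by norm_num [hsg_def])
      have hsgsq : ∀ s, (sg s)^2 = 1 := by
        intro s; rcases hsg s with h|h <;> rw [h] <;> norm_num
      set Zf : Fin (2*m*d) → EuclideanSpace ℝ (Fin d) :=
        fun j => EuclideanSpace.single ((e.symm j).2.2) (sg (e.symm j).1 * ε) with hZf_def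
      refine ⟨Zf, ?_⟩
      intro K G hKdef hGdef
      have hZi : ∀ j i, Zf j i = if i = (e.symm j).2.2 then sg (e.symm j).1 * ε else 0 := by
        intro j i
        rw [hZf_def]
        exact EuclideanSpace.single_apply _ _ _
      have hZnorm : ∀ j, ‖Zf j‖^2 = t := by
        intro j
        rw [euclid_norm_sq]
        have hterm : ∀ i, (Zf j i)^2
            = if i = (e.symm j).2.2 then (sg (e.symm j).1 * ε)^2 else 0 := by
          intro i; rw [hZi]; by_cases hi : i = (e.symm j).2.2 <;> simp [hi]
        rw [Finset.sum_congr rfl (fun i _ => hterm i),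
          Finset.sum_ite_eq' Finset.univ _ (fun _ => (sg (e.symm j).1 * ε)^2)]
        simp only [Finset.mem_univ, if_true]
        rw [mul_pow, hsgsq, one_mul, hε2]
      have hGval : ∀ i j, G i j = if i = (e.symm j).2.2 then sg (e.symm j).1 * ε * E else 0 := by
        intro i j
        rw [hGdef]
        show Zf j i * Real.exp (-(1/2) * ‖Zf j‖^2) = _
        rw [hZnorm, ← hE_def, hZi, ite_mul, zero_mul]
      have hKnorm : ∀ j l, ‖Zf j - Zf l‖^2 =
          if (e.symm j).2.2 = (e.symm l).2.2
          then (sg (e.symm j).1 * ε - sg (e.symm l).1 * ε)^2 else 2*t := by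
        intro j l
        rw [euclid_norm_sq]
        have hcomp : ∀ i, ((Zf j - Zf l) i)^2 =
            ((if i = (e.symm j).2.2 then sg (e.symm j).1 * ε else 0)
              - (if i = (e.symm l).2.2 then sg (e.symm l).1 * ε else 0))^2 := by
          intro i
          have : (Zf j - Zf l) i = Zf j i - Zf l i := rfl
          rw [this, hZi, hZi]
        rw [Finset.sum_congr rfl (fun i _ => hcomp i), sum_sq_single_sub]
        by_cases hc : (e.symm j).2.2 = (e.symm l).2.2
        · rw [if_pos hc, if_pos hc]
        · rw [if_neg hc, if_neg hc, mul_pow, mul_pow, hsgsq, hsgsq, hε2]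
          ring
      have hKval : ∀ j l, K j l = E^2 * (1 + (if (e.symm j).2.2 = (e.symm l).2.2
          then (Real.cosh t - 1) + (sg (e.symm j).1 * sg (e.symm l).1) * Real.sinh t else 0)) := by
        intro j l
        rw [hKdef]
        show Real.exp (-(1/2) * ‖Zf j - Zf l‖^2) = _
        rw [hKnorm]
        by_cases hc : (e.symm j).2.2 = (e.symm l).2.2
        · rw [if_pos hc, if_pos hc]
          rcases hsg (e.symm j).1 with h1|h1 <;> rcases hsg (e.symm l).1 with h2|h2 <;>
            rw [h1, h2]
          · have hx : -(1/2:ℝ) * ((1*ε - 1*ε)^2) = 0 := by ring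
            rw [hx, Real.exp_zero, hE2]
            have hcs : (1:ℝ) + ((Real.cosh t - 1) + (1*1)*Real.sinh t) = Real.exp t := by
              rw [← Real.cosh_add_sinh t]; ring
            rw [hcs, ← Real.exp_add]; norm_num
          · have hx : -(1/2:ℝ) * ((1*ε - (-1)*ε)^2) = -(2*t) := by rw [← hε2]; ring
            rw [hx, hE2]
            have hcs : (1:ℝ) + ((Real.cosh t - 1) + (1*(-1))*Real.sinh t) = Real.exp (-t) := by
              rw [← Real.cosh_sub_sinh t]; ring
            rw [hcs, ← Real.exp_add]; congr 1; ring
          · have hx : -(1/2:ℝ) * (((-1)*ε - 1*ε)^2) = -(2*t) := by rw [← hε2]; ring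
            rw [hx, hE2]
            have hcs : (1:ℝ) + ((Real.cosh t - 1) + ((-1)*1)*Real.sinh t) = Real.exp (-t) := by
              rw [← Real.cosh_sub_sinh t]; ring
            rw [hcs, ← Real.exp_add]; congr 1; ring
          · have hx : -(1/2:ℝ) * (((-1)*ε - (-1)*ε)^2) = 0 := by ring
            rw [hx, Real.exp_zero, hE2]
            have hcs : (1:ℝ) + ((Real.cosh t - 1) + ((-1)*(-1))*Real.sinh t) = Real.exp t := by
              rw [← Real.cosh_add_sinh t]; ring
            rw [hcs, ← Real.exp_add]; norm_num
        · rw [if_neg hc, if_neg hc]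
          have hx : -(1/2:ℝ) * (2*t) = -t := by ring
          rw [hx, hE2]; ring
      have hKherm : K.IsHermitian := by
        rw [hKdef]
        ext j l
        simp only [Matrix.conjTranspose_apply, Matrix.of_apply, star_trivial]
        rw [norm_sub_rev]
      have hcosh1 : (1:ℝ) ≤ Real.cosh t := Real.one_le_cosh t
      have hsinh0 : (0:ℝ) ≤ Real.sinh t := Real.sinh_nonneg_iff.2 ht0.le
      have hKpsd : K.PosSemidef := by
        refine Matrix.PosSemidef.of_dotProduct_mulVec_nonneg hKherm (fun x => ?_)
        rw [star_trivial]
        have hform : x ⬝ᵥ K *ᵥ x = ∑ j, ∑ l, x j * (K j l * x l) := by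
          simp [dotProduct, Matrix.mulVec, Finset.mul_sum]
        rw [hform]
        have h1 : ∑ j, ∑ l, x j * (K j l * x l)
            = ∑ p : Fin 2 × Fin m × Fin d, ∑ q : Fin 2 × Fin m × Fin d,
                x (e p) * (K (e p) (e q) * x (e q)) := by
          rw [← Equiv.sum_comp e (fun j => ∑ l, x j * (K j l * x l))]
          refine Finset.sum_congr rfl (fun p _ => ?_)
          rw [← Equiv.sum_comp e (fun l => x (e p) * (K (e p) l * x l))]
        rw [h1]
        have h2 : ∀ p q : Fin 2 × Fin m × Fin d, x (e p) * (K (e p) (e q) * x (e q)) =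
            E^2 * (x (e p) * x (e q))
            + (E^2*(Real.cosh t - 1)) * (if p.2.2 = q.2.2 then x (e p) * x (e q) else 0)
            + (E^2*Real.sinh t) * (if p.2.2 = q.2.2
                then (sg p.1 * x (e p)) * (sg q.1 * x (e q)) else 0) := by
          intro p q
          rw [hKval, Equiv.symm_apply_apply, Equiv.symm_apply_apply]
          by_cases hc : p.2.2 = q.2.2
          · rw [if_pos hc, if_pos hc, if_pos hc]; ring
          · rw [if_neg hc, if_neg hc, if_neg hc]; ring
        rw [Finset.sum_congr rfl (fun p _ => Finset.sum_congr rfl (fun q _ => h2 p q))]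
        have e1 : ∑ p : Fin 2 × Fin m × Fin d, ∑ q : Fin 2 × Fin m × Fin d,
            E^2 * (x (e p) * x (e q)) = E^2 * ((∑ p : Fin 2 × Fin m × Fin d, x (e p))^2) := by
          simp only [← Finset.mul_sum]
          congr 1
          rw [sq, ← Finset.sum_mul]
        have e2 : ∑ p : Fin 2 × Fin m × Fin d, ∑ q : Fin 2 × Fin m × Fin d,
            (E^2*(Real.cosh t - 1)) * (if p.2.2 = q.2.2 then x (e p) * x (e q) else 0)
            = (E^2*(Real.cosh t - 1)) * (∑ i : Fin d,
                (∑ p : Fin 2 × Fin m × Fin d, if p.2.2 = i then x (e p) else 0)^2) := by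
          simp only [← Finset.mul_sum]
          congr 1
          exact pair_ind_sq (fun p : Fin 2 × Fin m × Fin d => p.2.2) (fun p => x (e p))
        have e3 : ∑ p : Fin 2 × Fin m × Fin d, ∑ q : Fin 2 × Fin m × Fin d,
            (E^2*Real.sinh t) * (if p.2.2 = q.2.2
                then (sg p.1 * x (e p)) * (sg q.1 * x (e q)) else 0)
            = (E^2*Real.sinh t) * (∑ i : Fin d,
                (∑ p : Fin 2 × Fin m × Fin d, if p.2.2 = i then sg p.1 * x (e p) else 0)^2) := by
          simp only [← Finset.mul_sum]
          congr 1
          exact pair_ind_sq (fun p : Fin 2 × Fin m × Fin d => p.2.2) (fun p => sg p.1 * x (e p))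
        simp only [Finset.sum_add_distrib]
        rw [e1, e2, e3]
        have hn1 : (0:ℝ) ≤ (∑ p : Fin 2 × Fin m × Fin d, x (e p))^2 := sq_nonneg _
        have hn2 : (0:ℝ) ≤ ∑ i : Fin d,
            (∑ p : Fin 2 × Fin m × Fin d, if p.2.2 = i then x (e p) else 0)^2 :=
          Finset.sum_nonneg (fun i _ => sq_nonneg _)
        have hn3 : (0:ℝ) ≤ ∑ i : Fin d,
            (∑ p : Fin 2 × Fin m × Fin d, if p.2.2 = i then sg p.1 * x (e p) else 0)^2 :=
          Finset.sum_nonneg (fun i _ => sq_nonneg _)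
        have hc1 : (0:ℝ) ≤ E^2 := sq_nonneg _
        have hc2 : (0:ℝ) ≤ E^2*(Real.cosh t - 1) := by nlinarith
        have hc3 : (0:ℝ) ≤ E^2*Real.sinh t := by nlinarith
        have := mul_nonneg hc1 hn1
        have := mul_nonneg hc2 hn2
        have := mul_nonneg hc3 hn3
        linarith
      have hApd : (K + σ^2 • 1).PosDef := posdef_shift K hKpsd σ hσ
      refine ⟨hApd.det_pos.ne'.isUnit, ?_⟩
      have hrow : ∀ (i : Fin d) (p : Fin 2 × Fin m × Fin d),
          G i (e p) = if i = p.2.2 then sg p.1 * ε * E else 0 := by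
        intro i p; rw [hGval, Equiv.symm_apply_apply]
      have hcount : ∀ (i : Fin d) (W : Fin 2 → ℝ),
          (∑ p : Fin 2 × Fin m × Fin d, if i = p.2.2 then W p.1 else 0) = (m:ℝ) * (W 0 + W 1) := by
        intro i W
        rw [Fintype.sum_prod_type]
        have hs : ∀ s : Fin 2, ∑ q : Fin m × Fin d, (if i = q.2 then W s else 0) = (m:ℝ) * W s := by
          intro s
          rw [Fintype.sum_prod_type]
          have hr : ∀ r : Fin m, ∑ i2 : Fin d, (if i = i2 then W s else 0) = W s := by
            intro r
            rw [Finset.sum_ite_eq Finset.univ i (fun _ => W s)]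
            simp
          rw [Finset.sum_congr rfl (fun r _ => hr r), Finset.sum_const, Finset.card_univ,
            Fintype.card_fin, nsmul_eq_mul]
        rw [Finset.sum_congr rfl (fun s _ => hs s), Fin.sum_univ_two]
        ring
      have hN : ∀ i : Fin d, (fun j => G i j) ⬝ᵥ (fun j => G i j)
          = 2*(m:ℝ)*(t*Real.exp (-t)) := by
        intro i
        rw [dotProduct]
        rw [← Equiv.sum_comp e (fun j => G i j * G i j)]
        have hterm : ∀ p : Fin 2 × Fin m × Fin d,
            G i (e p) * G i (e p) = if i = p.2.2 then (ε*E)^2 else 0 := by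
          intro p
          rw [hrow]
          by_cases hc : i = p.2.2
          · rw [if_pos hc, if_pos hc]
            linear_combination (ε^2*E^2) * (hsgsq p.1)
          · rw [if_neg hc, if_neg hc, mul_zero]
        rw [Finset.sum_congr rfl (fun p _ => hterm p), hcount i (fun _ => (ε*E)^2)]
        rw [mul_pow, hε2, hE2]
        ring
      have hsg0 : sg 0 = 1 := by norm_num [hsg_def]
      have hsg1 : sg 1 = -1 := by norm_num [hsg_def]
      have hQ : ∀ i : Fin d, (fun j => G i j) ⬝ᵥ (K *ᵥ (fun j => G i j))
          = (m:ℝ)^2 * (4*((t*Real.exp (-t))*(Real.exp (-t)*Real.sinh t))) := by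
        intro i
        have hform : (fun j => G i j) ⬝ᵥ (K *ᵥ (fun j => G i j))
            = ∑ j, ∑ l, G i j * (K j l * G i l) := by
          simp [dotProduct, Matrix.mulVec, Finset.mul_sum]
        rw [hform]
        have h1 : ∑ j, ∑ l, G i j * (K j l * G i l)
            = ∑ p : Fin 2 × Fin m × Fin d, ∑ q : Fin 2 × Fin m × Fin d,
                G i (e p) * (K (e p) (e q) * G i (e q)) := by
          rw [← Equiv.sum_comp e (fun j => ∑ l, G i j * (K j l * G i l))]
          refine Finset.sum_congr rfl (fun p _ => ?_)
          rw [← Equiv.sum_comp e (fun l => G i (e p) * (K (e p) l * G i l))]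
        rw [h1]
        have h2 : ∀ p q : Fin 2 × Fin m × Fin d, G i (e p) * (K (e p) (e q) * G i (e q)) =
            if i = p.2.2 then (if i = q.2.2 then
              (sg p.1*ε*E) * ((E^2*(Real.cosh t + (sg p.1*sg q.1) * Real.sinh t)) * (sg q.1*ε*E))
              else 0) else 0 := by
          intro p q
          rw [hrow, hrow, hKval, Equiv.symm_apply_apply, Equiv.symm_apply_apply]
          by_cases hp : i = p.2.2
          · by_cases hqq : i = q.2.2
            · have hc : p.2.2 = q.2.2 := hp.symm.trans hqq
              rw [if_pos hp, if_pos hqq, if_pos hp, if_pos hqq, if_pos hc]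
              ring
            · rw [if_pos hp, if_neg hqq, if_pos hp, if_neg hqq, mul_zero, mul_zero]
          · rw [if_neg hp, if_neg hp, zero_mul]
        rw [Finset.sum_congr rfl (fun p _ => Finset.sum_congr rfl (fun q _ => h2 p q))]
        have h3 : ∀ p : Fin 2 × Fin m × Fin d,
            (∑ q : Fin 2 × Fin m × Fin d, if i = p.2.2 then (if i = q.2.2 then
              (sg p.1*ε*E) * ((E^2*(Real.cosh t + (sg p.1*sg q.1) * Real.sinh t)) * (sg q.1*ε*E))
              else 0) else 0)
            = if i = p.2.2 then (m:ℝ) *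
                ((sg p.1*ε*E) * ((E^2*(Real.cosh t + (sg p.1*sg 0) * Real.sinh t)) * (sg 0*ε*E))
                + (sg p.1*ε*E) * ((E^2*(Real.cosh t + (sg p.1*sg 1) * Real.sinh t)) * (sg 1*ε*E)))
              else 0 := by
          intro p
          by_cases hp : i = p.2.2
          · simp only [if_pos hp]
            exact hcount i (fun s' =>
              (sg p.1*ε*E) * ((E^2*(Real.cosh t + (sg p.1*sg s') * Real.sinh t)) * (sg s'*ε*E)))
          · simp only [if_neg hp, Finset.sum_const_zero]
        rw [Finset.sum_congr rfl (fun p _ => h3 p)]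
        rw [hcount i (fun s => (m:ℝ) *
            ((sg s*ε*E) * ((E^2*(Real.cosh t + (sg s*sg 0) * Real.sinh t)) * (sg 0*ε*E))
            + (sg s*ε*E) * ((E^2*(Real.cosh t + (sg s*sg 1) * Real.sinh t)) * (sg 1*ε*E))))]
        rw [hsg0, hsg1]
        have hfinal : (m:ℝ) * ((m:ℝ) *
            ((1*ε*E) * ((E^2*(Real.cosh t + (1*1) * Real.sinh t)) * (1*ε*E))
            + (1*ε*E) * ((E^2*(Real.cosh t + (1*(-1)) * Real.sinh t)) * ((-1)*ε*E)))
            + (m:ℝ) *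
            (((-1)*ε*E) * ((E^2*(Real.cosh t + ((-1)*1) * Real.sinh t)) * (1*ε*E))
            + ((-1)*ε*E) * ((E^2*(Real.cosh t + ((-1)*(-1)) * Real.sinh t)) * ((-1)*ε*E))))
            = (m:ℝ)^2 * (4*((ε^2*E^2)*(E^2*Real.sinh t))) := by ring
        rw [hfinal, hε2, hE2]
      have hNval0 : (0:ℝ) < 2*(m:ℝ)*(t*Real.exp (-t)) := by
        have h := mul_pos ht0 (Real.exp_pos (-t))
        nlinarith [mul_pos hm0 h]
      have hQval0 : (0:ℝ) ≤ (m:ℝ)^2 * (4*((t*Real.exp (-t))*(Real.exp (-t)*Real.sinh t))) := by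
        have h1 : 0 ≤ t*Real.exp (-t) := mul_nonneg ht0.le (Real.exp_pos _).le
        have h2 : 0 ≤ Real.exp (-t)*Real.sinh t := mul_nonneg (Real.exp_pos _).le hsinh0
        have := mul_nonneg h1 h2
        nlinarith
      have hvAv : ∀ i : Fin d, (fun j => G i j) ⬝ᵥ ((K + σ^2 • 1) *ᵥ (fun j => G i j))
          = (m:ℝ)^2 * (4*((t*Real.exp (-t))*(Real.exp (-t)*Real.sinh t)))
            + σ^2 * (2*(m:ℝ)*(t*Real.exp (-t))) := by
        intro i
        rw [Matrix.add_mulVec, dotProduct_add, Matrix.smul_mulVec, Matrix.one_mulVec,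
          dotProduct_smul, hQ, hN, smul_eq_mul]
      have hsinh2 : 2 * Real.exp (-t) * Real.sinh t = 1 - Real.exp (-(2*t)) := by
        rw [Real.sinh_eq]
        have h1 : Real.exp (-t) * Real.exp t = 1 := by rw [← Real.exp_add]; simp
        have h2 : Real.exp (-t) * Real.exp (-t) = Real.exp (-(2*t)) := by
          rw [← Real.exp_add]; congr 1; ring
        field_simp
        linear_combination h1 - h2
      have hexple : Real.exp (-(2*t)) ≤ 1 := Real.exp_le_one_iff.2 (by linarith)
      have hDpos : 0 < (m:ℝ)*(1 - Real.exp (-(2*t))) + σ^2 := by nlinarith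
      set R := 2*(m:ℝ)*t*Real.exp (-t) / ((m:ℝ)*(1 - Real.exp (-(2*t))) + σ^2) with hR_def
      have hratio : ∀ i : Fin d,
          R ≤ (fun j => G i j) ⬝ᵥ ((K + σ^2 • 1)⁻¹ *ᵥ (fun j => G i j)) := by
        intro i
        have hq : 0 < (fun j => G i j) ⬝ᵥ ((K + σ^2 • 1) *ᵥ (fun j => G i j)) := by
          rw [hvAv]
          have := mul_pos (pow_pos hσ 2) hNval0
          linarith [hQval0]
        have hlow := inv_quad_lower (K + σ^2 • 1) hApd (fun j => G i j) hq
        have hNQ : ((fun j => G i j) ⬝ᵥ (fun j => G i j))^2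
            / ((fun j => G i j) ⬝ᵥ ((K + σ^2 • 1) *ᵥ (fun j => G i j))) = R := by
          rw [hN, hvAv, hR_def]
          have hden : (m:ℝ)^2 * (4*((t*Real.exp (-t))*(Real.exp (-t)*Real.sinh t)))
              + σ^2 * (2*(m:ℝ)*(t*Real.exp (-t)))
              = (2*(m:ℝ)*(t*Real.exp (-t))) * ((m:ℝ)*(2*Real.exp (-t)*Real.sinh t) + σ^2) := by
            ring
          rw [hden, pow_two, mul_div_mul_left _ _ (ne_of_gt hNval0), hsinh2]
          congr 1
          ring
        linarith [hNQ ▸ hlow]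
      rw [trace_form]
      have hsum : (d:ℝ) * R ≤ ∑ i : Fin d,
          (fun j => G i j) ⬝ᵥ ((K + σ^2 • 1)⁻¹ *ᵥ (fun j => G i j)) := by
        calc (d:ℝ)*R = ∑ _i : Fin d, R := by
              rw [Finset.sum_const, Finset.card_univ, Fintype.card_fin, nsmul_eq_mul]
          _ ≤ _ := Finset.sum_le_sum (fun i _ => hratio i)
      have hnum := numeric_bound (m:ℝ) σ hm1 hσ hσm
      rw [← hs0_def] at hnum
      rw [← ht_def] at hnum
      have hd0 : (0:ℝ) ≤ d := Nat.cast_nonneg d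
      have hfin : (d:ℝ)*(1-R) ≤ (d:ℝ) * Real.sqrt (2*σ^2/((m:ℝ)+σ^2)) := by
        refine mul_le_mul_of_nonneg_left ?_ hd0
        rw [hR_def]
        exact hnum
      nlinarith [hsum, hfin]
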